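/- (Proposition 1, equilibrium structure) Fix γ ∈ [0, 1] and a real κ with 0 < κ < sup{f(α, γ) : α ∈ [0, 1/2]}. Then the equation f(α, γ) = κ has exactly two solutions α₁ < α₂ in (0, 1/2); moreover f(α, γ) > κ for all α ∈ (α₁, α₂) and f(α, γ) < κ for all α ∈ (0, α₁) ∪ (α₂, 1/2). In terms of honest hash rate H (related by α = M/(H+M) with κ = CM/B), this says there are exactly two equilibria H*₁ < H*₂, honest miners' profit is positive for H between them and negative outside, so H*₂ is stable and H*₁ is unstable. -/

import Mathlib

noncomputable section

/-- Attacker's expected per-block reward (normalized by the block reward) under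
Eyal–Sirer selfish mining, numerator. -/
def Na (α γ : ℝ) : ℝ :=
  (-2*α^4 + 5*α^3 - 4*α^2 + α) * γ + 4*α^4 - 9*α^3 + 4*α^2

/-- Honest miners' expected per-block reward (normalized by the block reward)
under Eyal–Sirer selfish mining, numerator. -/
def Nh (α γ : ℝ) : ℝ :=
  (2*α^4 - 5*α^3 + 4*α^2 - α) * γ - 4*α^4 + 10*α^3 - 6*α^2 - α + 1

/-- Common denominator of the Eyal–Sirer reward expressions. -/
def D (α : ℝ) : ℝ := 2*α^3 - 4*α^2 + 1

/-- Honest miners' share of total effective rewards times `α/(1-α)`; equality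
`f α γ = MC/B` characterizes zero honest profit under elastic hash supply. -/
def f (α γ : ℝ) : ℝ := α * Nh α γ / ((1 - α) * (Na α γ + Nh α γ))

/-! ### Auxiliary polynomials -/

/-- Numerator of `f` as a polynomial. -/
def Np (γ x : ℝ) : ℝ := (2*x^5-5*x^4+4*x^3-x^2)*γ - 4*x^5+10*x^4-6*x^3-x^2+x

/-- Denominator of `f` as a polynomial. -/
def Dp (x : ℝ) : ℝ := -x^4+3*x^3-x^2-2*x+1

/-- Numerator of the derivative of `f`. -/
def Pp (γ x : ℝ) : ℝ :=
  1 + (-2-2*γ)*x + (14*γ-15)*x^2 + (58-36*γ)*x^3 + (39*γ-68)*x^4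
    + (10-8*γ)*x^5 + (36-17*γ)*x^6 + (12*γ-24)*x^7 + (4-2*γ)*x^8

private lemma f_eq (γ x : ℝ) : f x γ = Np γ x / Dp x := by
  have h1 : x * Nh x γ = Np γ x := by unfold Nh Np; ring
  have h2 : (1-x) * (Na x γ + Nh x γ) = Dp x := by unfold Na Nh Dp; ring
  unfold f; rw [h1, h2]

private lemma Dp_pos {x : ℝ} (h0 : 0 ≤ x) (h1 : x ≤ 1/2) : 0 < Dp x := by
  have hQ : 0 < x^3 - 2*x^2 - x + 1 := by
    rcases eq_or_lt_of_le h0 with h | h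
    · rw [← h]; norm_num
    · nlinarith [pow_pos h 3, mul_nonneg h.le (by linarith : (0:ℝ) ≤ 1 - 2*x)]
  have : Dp x = (1 - x) * (x^3 - 2*x^2 - x + 1) := by unfold Dp; ring
  rw [this]
  exact mul_pos (by linarith) hQ

private lemma hasDerivAt_poly5 (c5 c4 c3 c2 c1 c0 x : ℝ) :
    HasDerivAt (fun t : ℝ => c5*t^5+c4*t^4+c3*t^3+c2*t^2+c1*t+c0)
      (5*c5*x^4+4*c4*x^3+3*c3*x^2+2*c2*x+c1) x := by
  have h := ((((((hasDerivAt_pow 5 x).const_mul c5).add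
      ((hasDerivAt_pow 4 x).const_mul c4)).add
      ((hasDerivAt_pow 3 x).const_mul c3)).add
      ((hasDerivAt_pow 2 x).const_mul c2)).add
      ((hasDerivAt_id' x).const_mul c1)).add_const c0
  exact h.congr_deriv (by push_cast; ring)

private lemma hasDerivAt_poly8 (c8 c7 c6 c5 c4 c3 c2 c1 c0 x : ℝ) :
    HasDerivAt (fun t : ℝ => c8*t^8+c7*t^7+c6*t^6+c5*t^5+c4*t^4+c3*t^3+c2*t^2+c1*t+c0)
      (8*c8*x^7+7*c7*x^6+6*c6*x^5+5*c5*x^4+4*c4*x^3+3*c3*x^2+2*c2*x+c1) x := by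
  have h := (((((((((hasDerivAt_pow 8 x).const_mul c8).add
      ((hasDerivAt_pow 7 x).const_mul c7)).add
      ((hasDerivAt_pow 6 x).const_mul c6)).add
      ((hasDerivAt_pow 5 x).const_mul c5)).add
      ((hasDerivAt_pow 4 x).const_mul c4)).add
      ((hasDerivAt_pow 3 x).const_mul c3)).add
      ((hasDerivAt_pow 2 x).const_mul c2)).add
      ((hasDerivAt_id' x).const_mul c1)).add_const c0
  exact h.congr_deriv (by push_cast; ring)

private lemma hasDerivAt_f (γ x : ℝ) (hD : Dp x ≠ 0) :
    HasDerivAt (fun t => f t γ) (Pp γ x / (Dp x)^2) x := by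
  have hN : HasDerivAt (fun t => Np γ t)
      (5*(2*γ-4)*x^4+4*(10-5*γ)*x^3+3*(4*γ-6)*x^2+2*(-γ-1)*x+1) x := by
    have hfun : (fun t => Np γ t)
        = (fun t : ℝ => (2*γ-4)*t^5+(10-5*γ)*t^4+(4*γ-6)*t^3+(-γ-1)*t^2+1*t+0) := by
      funext t; unfold Np; ring
    rw [hfun]; exact hasDerivAt_poly5 (2*γ-4) (10-5*γ) (4*γ-6) (-γ-1) 1 0 x
  have hDd : HasDerivAt (fun t => Dp t)
      (5*0*x^4+4*(-1)*x^3+3*3*x^2+2*(-1)*x+(-2)) x := by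
    have hfun : (fun t => Dp t)
        = (fun t : ℝ => 0*t^5+(-1)*t^4+3*t^3+(-1)*t^2+(-2)*t+1) := by
      funext t; unfold Dp; ring
    rw [hfun]; exact hasDerivAt_poly5 0 (-1) 3 (-1) (-2) 1 x
  have h := hN.div hDd hD
  have hfun : (fun t => f t γ) = fun t => Np γ t / Dp t := by
    funext t; exact f_eq γ t
  rw [hfun]
  exact h.congr_deriv (by unfold Np Dp Pp; ring)

private lemma qA_neg {x : ℝ} (h0 : 0 ≤ x) (h1 : x ≤ 1/2) :
    -2-34*x+106*x^2-60*x^3-70*x^4+76*x^5-16*x^6 < 0 := by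
  nlinarith [sq_nonneg x, sq_nonneg (x-1/2), mul_nonneg h0 h0, sq_nonneg (x*(x-1/2)),
    mul_nonneg (mul_nonneg h0 h0) h0, mul_nonneg (sub_nonneg.2 h1) h0]

private lemma q2_neg {x : ℝ} (h0 : 0 ≤ x) (h1 : x ≤ 1/2) :
    -4-10*x+46*x^2-24*x^3-38*x^4+38*x^5-8*x^6 < 0 := by
  nlinarith [sq_nonneg x, sq_nonneg (x-1/2), mul_nonneg h0 h0, sq_nonneg (x*(x-1/2)),
    mul_nonneg (mul_nonneg h0 h0) h0, mul_nonneg (sub_nonneg.2 h1) h0]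

private lemma Pp_strictAnti (γ : ℝ) (hγ0 : 0 ≤ γ) (hγ1 : γ ≤ 1) :
    StrictAntiOn (fun x => Pp γ x) (Set.Icc 0 (1/2)) := by
  have hcont : Continuous fun x => Pp γ x := by unfold Pp; fun_prop
  apply strictAntiOn_of_deriv_neg (convex_Icc 0 (1/2)) hcont.continuousOn
  intro x hx
  rw [interior_Icc] at hx
  obtain ⟨hx0, hx1⟩ := hx
  have hd : HasDerivAt (fun x => Pp γ x)
      (8*(4-2*γ)*x^7+7*(12*γ-24)*x^6+6*(36-17*γ)*x^5+5*(10-8*γ)*x^4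
        +4*(39*γ-68)*x^3+3*(58-36*γ)*x^2+2*(14*γ-15)*x+(-2-2*γ)) x := by
    have hfun : (fun x => Pp γ x) = (fun t : ℝ =>
        (4-2*γ)*t^8+(12*γ-24)*t^7+(36-17*γ)*t^6+(10-8*γ)*t^5+(39*γ-68)*t^4
          +(58-36*γ)*t^3+(14*γ-15)*t^2+(-2-2*γ)*t+1) := by
      funext t; unfold Pp; ring
    rw [hfun]
    exact hasDerivAt_poly8 (4-2*γ) (12*γ-24) (36-17*γ) (10-8*γ) (39*γ-68)
      (58-36*γ) (14*γ-15) (-2-2*γ) 1 x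
  rw [hd.deriv]
  have hqA := qA_neg hx0.le hx1.le
  have hq2 := q2_neg hx0.le hx1.le
  have h12 : 0 < 1 - 2*x := by linarith
  have hA : (1-2*x) * (-2-34*x+106*x^2-60*x^3-70*x^4+76*x^5-16*x^6) < 0 :=
    mul_neg_of_pos_of_neg h12 hqA
  have hB : (1-2*x) * (-4-10*x+46*x^2-24*x^3-38*x^4+38*x^5-8*x^6) < 0 :=
    mul_neg_of_pos_of_neg h12 hq2
  have hid : 8*(4-2*γ)*x^7+7*(12*γ-24)*x^6+6*(36-17*γ)*x^5+5*(10-8*γ)*x^4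
        +4*(39*γ-68)*x^3+3*(58-36*γ)*x^2+2*(14*γ-15)*x+(-2-2*γ)
      = (1-γ) * ((1-2*x) * (-2-34*x+106*x^2-60*x^3-70*x^4+76*x^5-16*x^6))
        + γ * ((1-2*x) * (-4-10*x+46*x^2-24*x^3-38*x^4+38*x^5-8*x^6)) := by
    ring
  rw [hid]
  rcases eq_or_lt_of_le hγ1 with h | h
  · subst h; simpa using hB
  · have h1γ : 0 < 1 - γ := by linarith
    have := mul_neg_of_pos_of_neg h1γ hA
    have := mul_nonpos_of_nonneg_of_nonpos hγ0 hB.le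
    linarith

theorem two_equilibria (γ : ℝ) (hγ0 : 0 ≤ γ) (hγ1 : γ ≤ 1) (κ : ℝ)
    (hκ0 : 0 < κ)
    (hκ1 : κ < sSup ((fun α => f α γ) '' Set.Icc (0 : ℝ) (1/2))) :
    ∃ α₁ α₂ : ℝ, α₁ ∈ Set.Ioo (0 : ℝ) (1/2) ∧ α₂ ∈ Set.Ioo (0 : ℝ) (1/2) ∧
      α₁ < α₂ ∧ f α₁ γ = κ ∧ f α₂ γ = κ ∧
      (∀ α ∈ Set.Ioo (0 : ℝ) (1/2), f α γ = κ → α = α₁ ∨ α = α₂) ∧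
      (∀ α ∈ Set.Ioo α₁ α₂, f α γ > κ) ∧
      (∀ α ∈ Set.Ioo (0 : ℝ) α₁ ∪ Set.Ioo α₂ (1/2), f α γ < κ) := by
  set g : ℝ → ℝ := fun α => f α γ with hg
  -- continuity of g on [0,1/2]
  have hcontg : ContinuousOn g (Set.Icc 0 (1/2)) := by
    have hfun : g = fun x => Np γ x / Dp x := by funext t; exact f_eq γ t
    rw [hfun]
    apply ContinuousOn.div
    · exact (by unfold Np; fun_prop : Continuous fun x => Np γ x).continuousOn
    · exact (by unfold Dp; fun_prop : Continuous fun x => Dp x).continuousOn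
    · exact fun x hx => (Dp_pos hx.1 hx.2).ne'
  -- endpoint values
  have hg0 : g 0 = 0 := by simp [hg, f]
  have hghalf : g (1/2) = 0 := by
    have hNh : Nh (1/2) γ = 0 := by unfold Nh; ring
    show f (1/2) γ = 0
    unfold f
    rw [hNh, mul_zero, zero_div]
  -- the critical point m
  have hcontP : Continuous fun x => Pp γ x := by unfold Pp; fun_prop
  have hPanti := Pp_strictAnti γ hγ0 hγ1
  have hP0 : Pp γ 0 = 1 := by unfold Pp; ring
  have hPhalf : Pp γ (1/2) < 0 := by unfold Pp; nlinarith
  obtain ⟨m, hmIoo, hPm⟩ : ∃ m ∈ Set.Ioo (0:ℝ) (1/2), Pp γ m = 0 := by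
    have hsub := intermediate_value_Ioo' (by norm_num : (0:ℝ) ≤ 1/2) hcontP.continuousOn
    have h0mem : (0:ℝ) ∈ Set.Ioo (Pp γ (1/2)) (Pp γ 0) := by
      constructor
      · exact hPhalf
      · rw [hP0]; norm_num
    obtain ⟨m, hm, hPm⟩ := hsub h0mem
    exact ⟨m, hm, hPm⟩
  obtain ⟨hm0, hm1⟩ := hmIoo
  -- signs of P on each side of m
  have hPpos : ∀ x, 0 ≤ x → x < m → 0 < Pp γ x := by
    intro x h0 h1
    have := hPanti ⟨h0, by linarith⟩ ⟨hm0.le, hm1.le⟩ h1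
    simpa [hPm] using this
  have hPneg : ∀ x, m < x → x ≤ 1/2 → Pp γ x < 0 := by
    intro x h0 h1
    have := hPanti ⟨hm0.le, hm1.le⟩ ⟨by linarith, h1⟩ h0
    simpa [hPm] using this
  -- monotonicity of g
  have hmono : StrictMonoOn g (Set.Icc 0 m) := by
    apply strictMonoOn_of_deriv_pos (convex_Icc 0 m)
      (hcontg.mono (Set.Icc_subset_Icc le_rfl hm1.le))
    intro x hx
    rw [interior_Icc] at hx
    have hx0 : (0:ℝ) < x := hx.1
    have hx2 : x < 1/2 := lt_trans hx.2 hm1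
    have hd := hasDerivAt_f γ x (Dp_pos hx0.le hx2.le).ne'
    rw [hd.deriv]
    exact div_pos (hPpos x hx0.le hx.2) (pow_pos (Dp_pos hx0.le hx2.le) 2)
  have hanti : StrictAntiOn g (Set.Icc m (1/2)) := by
    apply strictAntiOn_of_deriv_neg (convex_Icc m (1/2))
      (hcontg.mono (Set.Icc_subset_Icc hm0.le le_rfl))
    intro x hx
    rw [interior_Icc] at hx
    have hx0 : (0:ℝ) < x := lt_trans hm0 hx.1
    have hx2 : x < 1/2 := hx.2
    have hd := hasDerivAt_f γ x (Dp_pos hx0.le hx2.le).ne'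
    rw [hd.deriv]
    exact div_neg_of_neg_of_pos (hPneg x hx.1 hx2.le) (pow_pos (Dp_pos hx0.le hx2.le) 2)
  -- g m is the maximum, so κ < g m
  have hub : ∀ a ∈ Set.Icc (0:ℝ) (1/2), g a ≤ g m := by
    intro a ha
    rcases le_total a m with h | h
    · exact hmono.monotoneOn ⟨ha.1, h⟩ ⟨hm0.le, le_rfl⟩ h
    · exact hanti.antitoneOn ⟨le_rfl, hm1.le⟩ ⟨h, ha.2⟩ h
  have hκm : κ < g m := by
    refine lt_of_lt_of_le hκ1 (csSup_le ?_ ?_)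
    · exact (Set.nonempty_Icc.2 (by norm_num)).image _
    · rintro _ ⟨a, ha, rfl⟩; exact hub a ha
  -- the two solutions
  obtain ⟨α₁, hα₁Ioo, hα₁⟩ : ∃ a ∈ Set.Ioo (0:ℝ) m, g a = κ := by
    have hsub := intermediate_value_Ioo hm0.le
      (hcontg.mono (Set.Icc_subset_Icc le_rfl hm1.le))
    have : κ ∈ Set.Ioo (g 0) (g m) := by rw [hg0]; exact ⟨hκ0, hκm⟩
    obtain ⟨a, ha, hfa⟩ := hsub this
    exact ⟨a, ha, hfa⟩
  obtain ⟨α₂, hα₂Ioo, hα₂⟩ : ∃ a ∈ Set.Ioo m (1/2:ℝ), g a = κ := by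
    have hsub := intermediate_value_Ioo' hm1.le
      (hcontg.mono (Set.Icc_subset_Icc hm0.le le_rfl))
    have : κ ∈ Set.Ioo (g (1/2)) (g m) := by rw [hghalf]; exact ⟨hκ0, hκm⟩
    obtain ⟨a, ha, hfa⟩ := hsub this
    exact ⟨a, ha, hfa⟩
  obtain ⟨hα₁0, hα₁m⟩ := hα₁Ioo
  obtain ⟨hα₂m, hα₂1⟩ := hα₂Ioo
  -- key sign facts
  have key1 : ∀ a, 0 < a → a < α₁ → g a < κ := by
    intro a h0 h1
    have := hmono ⟨h0.le, by linarith⟩ ⟨hα₁0.le, hα₁m.le⟩ h1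
    rwa [hα₁] at this
  have key2 : ∀ a, α₁ < a → a ≤ m → κ < g a := by
    intro a h0 h1
    have := hmono ⟨hα₁0.le, hα₁m.le⟩ ⟨by linarith, h1⟩ h0
    rwa [hα₁] at this
  have key3 : ∀ a, m ≤ a → a < α₂ → κ < g a := by
    intro a h0 h1
    have := hanti ⟨h0, by linarith⟩ ⟨hα₂m.le, hα₂1.le⟩ h1
    rwa [hα₂] at this
  have key4 : ∀ a, α₂ < a → a < 1/2 → g a < κ := by
    intro a h0 h1
    have := hanti ⟨hα₂m.le, hα₂1.le⟩ ⟨by linarith, h1.le⟩ h0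
    rwa [hα₂] at this
  have hbetween : ∀ a ∈ Set.Ioo α₁ α₂, κ < g a := by
    rintro a ⟨h0, h1⟩
    rcases le_total a m with h | h
    · exact key2 a h0 h
    · exact key3 a h h1
  refine ⟨α₁, α₂, ⟨hα₁0, lt_trans hα₁m hm1⟩, ⟨lt_trans hm0 hα₂m, hα₂1⟩,
    lt_trans hα₁m hα₂m, hα₁, hα₂, ?_, hbetween, ?_⟩
  · intro a ha hfa
    rcases lt_trichotomy a α₁ with h | h | h
    · exact absurd hfa (by have := key1 a ha.1 h; linarith)
    · exact Or.inl h
    rcases lt_trichotomy a α₂ with h' | h' | h'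
    · exact absurd hfa (by have := hbetween a ⟨h, h'⟩; linarith)
    · exact Or.inr h'
    · exact absurd hfa (by have := key4 a h' ha.2; linarith)
  · rintro a (⟨h0, h1⟩ | ⟨h0, h1⟩)
    · exact key1 a h0 h1
    · exact key4 a h0 h1
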